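/- arXiv:1901.02205 — 2 statements merged into one kernel-verified Lean document; each statement's English description precedes it below -/
import Mathlib

section
/- Let α ∈ [0,1) and γ ∈ [α,1). Then for every integer n ≥ 2, the inequality Σ_{k=1}^{n−1} 1/((n−k)^γ k^α) ≤ B(1−α, 1−γ) · n^{1−γ−α} holds, where B(1−α,1−γ) = ∫₀¹ x^{−α}(1−x)^{−γ} dx is the Euler Beta function. -/
open MeasureTheory Set ContinuousLinearMap

noncomputable section

/-- The Lebesgue measure on the time interval `I = [0,T]`. -/
def timeMeasure (T : ℝ) : Measure ℝ := volume.restrict (Set.Icc 0 T)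

/-- A strongly continuous contraction semigroup `S τ = e^{-τ G}` on a complex normed space. -/
structure IsContractionSemigroup {E : Type*} [NormedAddCommGroup E] [NormedSpace ℂ E]
    (S : ℝ → E →L[ℂ] E) : Prop where
  map_zero : S 0 = 1
  map_add : ∀ ⦃s t : ℝ⦄, 0 ≤ s → 0 ≤ t → S (s + t) = S s ∘L S t
  norm_le_one : ∀ ⦃t : ℝ⦄, 0 ≤ t → ‖S t‖ ≤ 1
  strong_continuity : ∀ x : E, ContinuousOn (fun t => S t x) (Set.Ici 0)

/-- `K` is the generator of the semigroup `S`, with the sign convention `S τ = e^{-τ K}`: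
the domain of `K` consists exactly of those vectors where the semigroup is differentiable
from the right at `τ = 0`, and there the derivative equals `-(K x)`. -/
def IsGenerator {E : Type*} [NormedAddCommGroup E] [NormedSpace ℂ E]
    (S : ℝ → E →L[ℂ] E) (K : E →ₗ.[ℂ] E) : Prop :=
  (∀ x : E, x ∈ K.domain ↔ ∃ y : E, HasDerivWithinAt (fun τ => S τ x) y (Set.Ici 0) 0) ∧
  ∀ (x : E) (hx : x ∈ K.domain),
    HasDerivWithinAt (fun τ => S τ x) (-(K ⟨x, hx⟩)) (Set.Ici 0) 0


private lemma beta_aux_exp (α γ N : ℝ) {t : ℝ} (ht : 0 < t) (htN : t < N) :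
    t ^ α * (N - t) ^ γ = Real.exp (α * Real.log t + γ * Real.log (N - t)) := by
  rw [Real.rpow_def_of_pos ht, Real.rpow_def_of_pos (by linarith), Real.exp_add]
  ring_nf

private lemma beta_aux_deriv (α γ N : ℝ) {t : ℝ} (ht : 0 < t) (htN : t < N) :
    HasDerivAt (fun t => α * Real.log t + γ * Real.log (N - t)) (α / t - γ / (N - t)) t := by
  have h1 : HasDerivAt (fun t : ℝ => Real.log t) t⁻¹ t := Real.hasDerivAt_log (ne_of_gt ht)
  have h2 : HasDerivAt (fun s : ℝ => N - s) (-1) t := by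
    simpa using (hasDerivAt_id t).const_sub N
  have h3 : HasDerivAt (fun s : ℝ => Real.log (N - s)) ((N - t)⁻¹ * -1) t :=
    (Real.hasDerivAt_log (sub_pos.mpr htN).ne').comp t h2
  have h4 := (h1.const_mul α).add (h3.const_mul γ)
  refine h4.congr_deriv ?_
  have : N - t ≠ 0 := (sub_pos.mpr htN).ne'
  ring

private lemma beta_mono (α γ N : ℝ) (hα : 0 ≤ α) (hγ : 0 ≤ γ) {x y : ℝ}
    (hx : 0 < x) (hxy : x ≤ y) (hy : y < N) (hcond : γ * y ≤ α * (N - y)) :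
    x ^ α * (N - x) ^ γ ≤ y ^ α * (N - y) ^ γ := by
  have hx' : x < N := lt_of_le_of_lt hxy hy
  have hy0 : 0 < y := lt_of_lt_of_le hx hxy
  set h : ℝ → ℝ := fun t => α * Real.log t + γ * Real.log (N - t) with hh
  have hmono : MonotoneOn h (Icc x y) := by
    apply monotoneOn_of_deriv_nonneg (convex_Icc x y)
    · apply ContinuousOn.add
      · exact continuousOn_const.mul (continuousOn_id.log
          (fun t ht => ne_of_gt (lt_of_lt_of_le hx ht.1)))
      · exact continuousOn_const.mul ((continuousOn_const.sub continuousOn_id).log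
          (fun t ht => by show N - t ≠ 0; have := ht.2; intro hc; nlinarith))
    · intro t ht
      rw [interior_Icc] at ht
      exact (beta_aux_deriv α γ N (lt_trans hx ht.1)
        (lt_trans ht.2 hy)).differentiableAt.differentiableWithinAt
    · intro t ht
      rw [interior_Icc] at ht
      have ht0 : 0 < t := lt_trans hx ht.1
      have htN : t < N := lt_trans ht.2 hy
      rw [(beta_aux_deriv α γ N ht0 htN).deriv, sub_nonneg, div_le_div_iff₀ (by linarith) ht0]
      nlinarith [mul_le_mul_of_nonneg_left ht.2.le hγ,
        mul_le_mul_of_nonneg_left (show N - y ≤ N - t by linarith [ht.2]) hα]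
  have key : h x ≤ h y := hmono (left_mem_Icc.mpr hxy) (right_mem_Icc.mpr hxy) hxy
  rw [beta_aux_exp α γ N hx hx', beta_aux_exp α γ N hy0 hy]
  exact Real.exp_le_exp.mpr key

private lemma beta_anti (α γ N : ℝ) (hα : 0 ≤ α) (hγ : 0 ≤ γ) {x y : ℝ}
    (hx : 0 < x) (hxy : x ≤ y) (hy : y < N) (hcond : α * (N - x) ≤ γ * x) :
    y ^ α * (N - y) ^ γ ≤ x ^ α * (N - x) ^ γ := by
  have hx' : x < N := lt_of_le_of_lt hxy hy
  have hy0 : 0 < y := lt_of_lt_of_le hx hxy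
  set h : ℝ → ℝ := fun t => α * Real.log t + γ * Real.log (N - t) with hh
  have hanti : AntitoneOn h (Icc x y) := by
    apply antitoneOn_of_deriv_nonpos (convex_Icc x y)
    · apply ContinuousOn.add
      · exact continuousOn_const.mul (continuousOn_id.log
          (fun t ht => ne_of_gt (lt_of_lt_of_le hx ht.1)))
      · exact continuousOn_const.mul ((continuousOn_const.sub continuousOn_id).log
          (fun t ht => by show N - t ≠ 0; have := ht.2; intro hc; nlinarith))
    · intro t ht
      rw [interior_Icc] at ht
      exact (beta_aux_deriv α γ N (lt_trans hx ht.1)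
        (lt_trans ht.2 hy)).differentiableAt.differentiableWithinAt
    · intro t ht
      rw [interior_Icc] at ht
      have ht0 : 0 < t := lt_trans hx ht.1
      have htN : t < N := lt_trans ht.2 hy
      rw [(beta_aux_deriv α γ N ht0 htN).deriv, sub_nonpos, div_le_div_iff₀ ht0 (by linarith)]
      nlinarith [mul_le_mul_of_nonneg_left ht.1.le hγ,
        mul_le_mul_of_nonneg_left (show N - t ≤ N - x by linarith [ht.1]) hα]
  have key : h y ≤ h x := hanti (left_mem_Icc.mpr hxy) (right_mem_Icc.mpr hxy) hxy
  rw [beta_aux_exp α γ N hx hx', beta_aux_exp α γ N hy0 hy]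
  exact Real.exp_le_exp.mpr key

private lemma beta_meas (α γ : ℝ) :
    Measurable (fun x : ℝ => 1 / (x ^ α * (1 - x) ^ γ)) := by
  fun_prop

private lemma beta_measN (α γ N : ℝ) :
    Measurable (fun x : ℝ => 1 / (x ^ α * (N - x) ^ γ)) := by fun_prop

private lemma beta_integrable_left (α γ : ℝ) (hα1 : α < 1) (hγ0 : 0 ≤ γ) :
    IntervalIntegrable (fun x : ℝ => 1 / (x ^ α * (1 - x) ^ γ)) volume 0 (1/2) := by
  have base : IntervalIntegrable (fun x : ℝ => x ^ (-α)) volume 0 (1/2) :=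
    intervalIntegral.intervalIntegrable_rpow' (by linarith)
  have hbase := base.const_mul ((2:ℝ) ^ γ)
  apply hbase.mono_fun' ((beta_meas α γ).aestronglyMeasurable.restrict)
  have hsub : Set.uIoc (0:ℝ) (1/2) = Ioc (0:ℝ) (1/2) := uIoc_of_le (by norm_num)
  rw [hsub]
  filter_upwards [ae_restrict_mem measurableSet_Ioc] with x hx
  obtain ⟨hx0, hx2⟩ := hx
  have hA : (0:ℝ) < x ^ α := Real.rpow_pos_of_pos hx0 α
  have hB : ((1:ℝ)/2) ^ γ ≤ (1 - x) ^ γ :=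
    Real.rpow_le_rpow (by norm_num) (by linarith) hγ0
  have hBpos : (0:ℝ) < ((1:ℝ)/2) ^ γ := Real.rpow_pos_of_pos (by norm_num) γ
  have hg0 : (0:ℝ) ≤ 1 / (x ^ α * (1 - x) ^ γ) :=
    div_nonneg one_pos.le (mul_nonneg (Real.rpow_nonneg hx0.le _) (Real.rpow_nonneg (by linarith) _))
  rw [Real.norm_of_nonneg hg0]
  have hrhs : (2:ℝ) ^ γ * x ^ (-α) = 1 / (((1:ℝ)/2) ^ γ * x ^ α) := by
    rw [Real.rpow_neg hx0.le, show ((1:ℝ)/2) = (2:ℝ)⁻¹ by norm_num,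
      Real.inv_rpow (by norm_num : (0:ℝ) ≤ 2)]
    field_simp
  rw [hrhs]
  apply one_div_le_one_div_of_le (by positivity)
  calc ((1:ℝ)/2) ^ γ * x ^ α ≤ (1 - x) ^ γ * x ^ α := mul_le_mul_of_nonneg_right hB hA.le
    _ = x ^ α * (1 - x) ^ γ := mul_comm _ _

private lemma beta_integrable (α γ : ℝ) (hα0 : 0 ≤ α) (hα1 : α < 1) (hγ0 : 0 ≤ γ)
    (hγ1 : γ < 1) :
    IntervalIntegrable (fun x : ℝ => 1 / (x ^ α * (1 - x) ^ γ)) volume 0 1 := by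
  have p1 := beta_integrable_left α γ hα1 hγ0
  have p2' := (beta_integrable_left γ α hγ1 hα0).comp_sub_left 1
  have p2 : IntervalIntegrable (fun x : ℝ => 1 / (x ^ α * (1 - x) ^ γ)) volume (1/2) 1 := by
    have heq : (fun x : ℝ => 1 / ((1 - x) ^ γ * (1 - (1 - x)) ^ α)) =
        fun x : ℝ => 1 / (x ^ α * (1 - x) ^ γ) := by
      funext x; rw [sub_sub_cancel, mul_comm]
    rw [heq] at p2'
    simpa [show (1:ℝ)-2⁻¹ = 2⁻¹ by norm_num] using p2'.symm
  exact p1.trans p2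

private lemma ae_ne_restrict (c : ℝ) (s : Set ℝ) :
    ∀ᵐ x ∂((volume : Measure ℝ).restrict s), x ≠ c := by
  refine ae_restrict_of_ae ?_
  rw [ae_iff]
  simp only [not_not, Set.setOf_eq_eq_singleton]
  exact Real.volume_singleton


set_option maxHeartbeats 2000000 in
/-- **Lemma 3.9** (discrete Beta-function estimate).
For `α ∈ [0,1)`, `γ ∈ [α,1)` and `n ≥ 2`:
`Σ_{k=1}^{n-1} 1/((n-k)^γ k^α) ≤ B(1-α,1-γ) n^{1-γ-α}`, where
`B(1-α,1-γ) = ∫₀¹ x^{-α}(1-x)^{-γ} dx` is the Euler Beta function. -/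
theorem discrete_beta_function_estimate
    (α γ : ℝ) (hα : α ∈ Ico (0:ℝ) 1) (hγ : γ ∈ Ico α 1)
    (n : ℕ) (hn : 2 ≤ n) :
    ∑ k ∈ Finset.Ico 1 n, 1 / (((n : ℝ) - (k : ℝ)) ^ γ * (k : ℝ) ^ α) ≤
      (∫ x in (0:ℝ)..1, 1 / (x ^ α * (1 - x) ^ γ)) * (n : ℝ) ^ (1 - γ - α) := by
  obtain ⟨hα0, hα1⟩ := hα
  obtain ⟨hγα, hγ1⟩ := hγ
  have hγ0 : 0 ≤ γ := hα0.trans hγα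
  set N : ℝ := (n : ℝ) with hNdef
  clear_value N
  have hN2 : (2:ℝ) ≤ N := by rw [hNdef]; exact_mod_cast hn
  have hN0 : (0:ℝ) < N := by linarith
  set F : ℝ → ℝ := fun x => 1 / (x ^ α * (N - x) ^ γ) with hFdef
  set g : ℝ → ℝ := fun x => 1 / (x ^ α * (1 - x) ^ γ) with hgdef
  have hgint : IntervalIntegrable g volume 0 1 := beta_integrable α γ hα0 hα1 hγ0 hγ1
  -- scaling identity
  have hscale : ∀ t ∈ Icc (0:ℝ) 1, F (N * t) = N ^ (-(α+γ)) * g t := by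
    intro t ht
    simp only [hFdef, hgdef]
    rw [Real.mul_rpow hN0.le ht.1, show N - N * t = N * (1 - t) by ring,
      Real.mul_rpow hN0.le (by linarith [ht.2]), Real.rpow_neg hN0.le,
      Real.rpow_add hN0]
    simp only [one_div, mul_inv]
    ring
  -- integrability of F on [0, N]
  have hFint : IntervalIntegrable F volume 0 N := by
    have hcomp : IntervalIntegrable (fun x => g (x * N⁻¹)) volume 0 N := by
      have h := hgint.comp_mul_right (c := N⁻¹)
      simpa [hN0.ne'] using h
    apply (hcomp.const_mul (N ^ (-(α+γ)))).mono_fun'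
      ((beta_measN α γ N).aestronglyMeasurable.restrict)
    rw [uIoc_of_le hN0.le]
    filter_upwards [ae_restrict_mem measurableSet_Ioc] with x hx
    have hFx : 0 ≤ F x := by
      simp only [hFdef]
      exact div_nonneg one_pos.le (mul_nonneg (Real.rpow_nonneg hx.1.le _)
        (Real.rpow_nonneg (by linarith [hx.2]) _))
    rw [Real.norm_of_nonneg hFx]
    have hxN : x = N * (x * N⁻¹) := by field_simp
    have heq : F x = N ^ (-(α+γ)) * g (x * N⁻¹) := by
      nth_rewrite 1 [hxN]
      exact hscale _ ⟨mul_nonneg hx.1.le (inv_nonneg.mpr hN0.le),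
        by rw [show x * N⁻¹ = x / N by ring]; exact (div_le_one hN0).mpr hx.2⟩
    exact le_of_eq heq
  -- the threshold m
  set m : ℕ := ⌊α * N / (α + γ)⌋₊ with hmdef
  have hmc0 : (m:ℝ) ≤ α * N / (α + γ) := Nat.floor_le (by positivity)
  have hcm0 : α * N / (α + γ) < (m:ℝ) + 1 := Nat.lt_floor_add_one _
  clear_value m
  clear hmdef
  have hmc : (m:ℝ) ≤ α * N / (α + γ) := hmc0
  have hcm : α * N / (α + γ) < (m:ℝ) + 1 := hcm0
  have hc_half : α * N / (α + γ) ≤ N / 2 := by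
    rcases lt_or_eq_of_le (show (0:ℝ) ≤ α + γ by linarith) with h | h
    · rw [div_le_iff₀ h]; nlinarith
    · have hα' : α = 0 := by linarith
      rw [hα', zero_mul, zero_div]
      linarith
  have hmN : (m:ℝ) ≤ N / 2 := hmc.trans hc_half
  have hmn : m + 1 ≤ n := by
    have h3 : m ≤ n - 1 := by
      have : (m:ℝ) ≤ ((n - 1 : ℕ) : ℝ) := by
        rw [Nat.cast_sub (by omega : 1 ≤ n)]
        push_cast
        rw [← hNdef]
        linarith
      exact_mod_cast this
    omega
  have hm1N : (m:ℝ) + 1 ≤ N := by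
    have : ((m+1 : ℕ) : ℝ) ≤ (n:ℝ) := by exact_mod_cast hmn
    push_cast at this; linarith
  -- nonnegativity of F on [0, N]
  have hFnonneg : ∀ x ∈ Icc (0:ℝ) N, 0 ≤ F x := by
    intro x hx
    simp only [hFdef]
    exact div_nonneg one_pos.le (mul_nonneg (Real.rpow_nonneg hx.1 _)
      (Real.rpow_nonneg (by linarith [hx.2]) _))
  -- integrability on subintervals
  have hFsub : ∀ a b : ℝ, a ∈ Icc (0:ℝ) N → b ∈ Icc (0:ℝ) N →
      IntervalIntegrable F volume a b := by
    intro a b ha hb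
    exact hFint.mono_set (uIcc_subset_uIcc (by rw [uIcc_of_le hN0.le]; exact ha)
      (by rw [uIcc_of_le hN0.le]; exact hb))
  -- per-term bound in the decreasing region
  have hdec : ∀ k : ℕ, 1 ≤ k → k ≤ m → F k ≤ ∫ x in ((k:ℝ)-1)..(k:ℝ), F x := by
    intro k hk1 hkm
    have hk1' : (1:ℝ) ≤ (k:ℝ) := by exact_mod_cast hk1
    have hkm' : (k:ℝ) ≤ (m:ℝ) := by exact_mod_cast hkm
    have hkN : (k:ℝ) < N := by linarith
    have hcond : γ * (k:ℝ) ≤ α * (N - k) := by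
      rcases lt_or_eq_of_le (show (0:ℝ) ≤ α + γ by linarith) with h | h
      · have hk2 : (k:ℝ) ≤ α * N / (α + γ) := hkm'.trans hmc
        rw [le_div_iff₀ h] at hk2
        nlinarith
      · exfalso
        have hz : α * N / (α + γ) = 0 := by rw [← h, div_zero]
        rw [hz] at hmc
        have : (k:ℝ) ≤ 0 := hkm'.trans hmc
        linarith
    have hInt : IntervalIntegrable F volume ((k:ℝ)-1) k :=
      hFsub _ _ ⟨by linarith, by linarith⟩ ⟨by linarith, by linarith⟩
    have hle : (fun _ : ℝ => F (k:ℝ)) ≤ᵐ[volume.restrict (Icc ((k:ℝ)-1) (k:ℝ))] F := by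
      filter_upwards [ae_restrict_mem measurableSet_Icc,
        ae_ne_restrict ((k:ℝ)-1) (Icc ((k:ℝ)-1) (k:ℝ))] with x hx hxne
      have hx1 : (k:ℝ) - 1 < x := lt_of_le_of_ne hx.1 (Ne.symm hxne)
      have hx0 : 0 < x := by linarith
      have hdenom := beta_mono α γ N hα0 hγ0 hx0 hx.2 hkN hcond
      simp only [hFdef]
      apply one_div_le_one_div_of_le
      · exact mul_pos (Real.rpow_pos_of_pos hx0 _)
          (Real.rpow_pos_of_pos (by linarith [hx.2]) _)
      · exact hdenom
    calc F (k:ℝ) = ∫ _ in ((k:ℝ)-1)..(k:ℝ), F (k:ℝ) := by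
          rw [intervalIntegral.integral_const, show (k:ℝ) - ((k:ℝ)-1) = 1 by ring, one_smul]
      _ ≤ ∫ x in ((k:ℝ)-1)..(k:ℝ), F x :=
          intervalIntegral.integral_mono_ae_restrict (by linarith)
            intervalIntegrable_const hInt hle
  -- per-term bound in the increasing region
  have hinc : ∀ k : ℕ, m + 1 ≤ k → k + 1 ≤ n → F k ≤ ∫ x in (k:ℝ)..((k:ℝ)+1), F x := by
    intro k hk1 hkn
    have hk0 : (0:ℝ) < (k:ℝ) := by
      have : 0 < k := by omega
      exact_mod_cast this
    have hk1' : (m:ℝ) + 1 ≤ (k:ℝ) := by exact_mod_cast hk1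
    have hkn' : (k:ℝ) + 1 ≤ N := by
      have : ((k+1:ℕ):ℝ) ≤ (n:ℝ) := by exact_mod_cast hkn
      push_cast at this; linarith
    have hcond : α * (N - k) ≤ γ * (k:ℝ) := by
      rcases lt_or_eq_of_le (show (0:ℝ) ≤ α + γ by linarith) with h | h
      · have hck : α * N / (α + γ) < (k:ℝ) := by linarith
        rw [div_lt_iff₀ h] at hck
        nlinarith
      · have hα' : α = 0 := by linarith
        have hγ' : γ = 0 := by linarith
        simp [hα', hγ']
    have hInt : IntervalIntegrable F volume (k:ℝ) ((k:ℝ)+1) :=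
      hFsub _ _ ⟨by linarith, by linarith⟩ ⟨by linarith, hkn'⟩
    have hle : (fun _ : ℝ => F (k:ℝ)) ≤ᵐ[volume.restrict (Icc (k:ℝ) ((k:ℝ)+1))] F := by
      filter_upwards [ae_restrict_mem measurableSet_Icc,
        ae_ne_restrict ((k:ℝ)+1) (Icc (k:ℝ) ((k:ℝ)+1))] with x hx hxne
      have hx1 : x < (k:ℝ) + 1 := lt_of_le_of_ne hx.2 hxne
      have hxN : x < N := by linarith
      have hdenom := beta_anti α γ N hα0 hγ0 hk0 hx.1 hxN hcond
      simp only [hFdef]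
      apply one_div_le_one_div_of_le
      · exact mul_pos (Real.rpow_pos_of_pos (by linarith [hx.1]) _)
          (Real.rpow_pos_of_pos (by linarith) _)
      · exact hdenom
    calc F (k:ℝ) = ∫ _ in (k:ℝ)..((k:ℝ)+1), F (k:ℝ) := by
          rw [intervalIntegral.integral_const, show (k:ℝ)+1 - (k:ℝ) = 1 by ring, one_smul]
      _ ≤ ∫ x in (k:ℝ)..((k:ℝ)+1), F x :=
          intervalIntegral.integral_mono_ae_restrict (by linarith)
            intervalIntegrable_const hInt hle
  -- sum over the decreasing region
  have hsum1 : ∑ k ∈ Finset.Ico 1 (m+1), F k ≤ ∫ x in (0:ℝ)..(m:ℝ), F x := by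
    have key : ∀ k ∈ Set.Ico 1 (m+1),
        IntervalIntegrable F volume ((k:ℝ)-1) (((k+1:ℕ):ℝ) - 1) := by
      intro k hk
      obtain ⟨hka, hkb⟩ := hk
      have hk1' : (1:ℝ) ≤ (k:ℝ) := by exact_mod_cast hka
      have hkm' : (k:ℝ) ≤ (m:ℝ) := by
        have : k ≤ m := by omega
        exact_mod_cast this
      apply hFsub
      · constructor <;> linarith
      · push_cast
        constructor <;> linarith
    have e1 := intervalIntegral.sum_integral_adjacent_intervals_Ico (μ := volume) (f := F)
      (a := fun k => (k:ℝ) - 1) (m := 1) (n := m+1) (by omega) key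
    push_cast at e1
    simp only [add_sub_cancel_right, sub_self] at e1
    rw [← e1]
    apply Finset.sum_le_sum
    intro k hk
    rw [Finset.mem_Ico] at hk
    exact hdec k hk.1 (by omega)
  -- sum over the increasing region
  have hsum2 : ∑ k ∈ Finset.Ico (m+1) n, F k ≤ ∫ x in ((m:ℝ)+1)..N, F x := by
    have key : ∀ k ∈ Set.Ico (m+1) n,
        IntervalIntegrable F volume ((k:ℝ)) (((k+1:ℕ):ℝ)) := by
      intro k hk
      obtain ⟨hka, hkb⟩ := hk
      have hk1' : (m:ℝ) + 1 ≤ (k:ℝ) := by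
        have : ((m+1:ℕ):ℝ) ≤ (k:ℝ) := by exact_mod_cast hka
        push_cast at this; linarith
      have hkn' : (k:ℝ) + 1 ≤ N := by
        have : ((k+1:ℕ):ℝ) ≤ (n:ℝ) := by exact_mod_cast hkb
        rw [← hNdef] at this
        push_cast at this; linarith
      have hm0 : (0:ℝ) ≤ (m:ℝ) := Nat.cast_nonneg m
      apply hFsub
      · constructor <;> linarith
      · push_cast
        constructor <;> linarith
    have e2 := intervalIntegral.sum_integral_adjacent_intervals_Ico (μ := volume) (f := F)
      (a := fun k => (k:ℝ)) (m := m+1) (n := n) hmn key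
    push_cast at e2
    rw [← hNdef] at e2
    rw [← e2]
    apply Finset.sum_le_sum
    intro k hk
    rw [Finset.mem_Ico] at hk
    exact hinc k hk.1 (by omega)
  -- joining the two integrals
  have hjoin : (∫ x in (0:ℝ)..(m:ℝ), F x) + (∫ x in ((m:ℝ)+1)..N, F x) ≤
      ∫ x in (0:ℝ)..N, F x := by
    have hm0 : (0:ℝ) ≤ (m:ℝ) := Nat.cast_nonneg m
    have i1 : IntervalIntegrable F volume 0 m :=
      hFsub _ _ ⟨le_refl 0, hN0.le⟩ ⟨hm0, by linarith⟩
    have i2 : IntervalIntegrable F volume (m:ℝ) ((m:ℝ)+1) :=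
      hFsub _ _ ⟨hm0, by linarith⟩ ⟨by linarith, hm1N⟩
    have i3 : IntervalIntegrable F volume ((m:ℝ)+1) N :=
      hFsub _ _ ⟨by linarith, hm1N⟩ ⟨hN0.le, le_refl N⟩
    have hmid : 0 ≤ ∫ x in (m:ℝ)..((m:ℝ)+1), F x :=
      intervalIntegral.integral_nonneg (by linarith)
        (fun x hx => hFnonneg x ⟨by linarith [hx.1], by linarith [hx.2]⟩)
    have e1 := intervalIntegral.integral_add_adjacent_intervals i1 i2
    have e2 := intervalIntegral.integral_add_adjacent_intervals (i1.trans i2) i3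
    linarith
  -- scaling of the full integral
  have hfinal : ∫ x in (0:ℝ)..N, F x = (∫ x in (0:ℝ)..1, g x) * N ^ (1-γ-α) := by
    have e := intervalIntegral.integral_comp_mul_left (a := (0:ℝ)) (b := 1) F hN0.ne'
    rw [mul_zero, mul_one] at e
    have e2 : (∫ x in (0:ℝ)..1, F (N * x)) = ∫ x in (0:ℝ)..1, N ^ (-(α+γ)) * g x := by
      apply intervalIntegral.integral_congr
      intro x hx
      rw [uIcc_of_le (by norm_num : (0:ℝ) ≤ 1)] at hx
      exact hscale x hx
    rw [e2, intervalIntegral.integral_const_mul, smul_eq_mul] at e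
    have hNpow : N * N ^ (-(α+γ)) = N ^ (1-γ-α) := by
      rw [show (1:ℝ)-γ-α = 1 + -(α+γ) by ring, Real.rpow_add hN0, Real.rpow_one]
    calc ∫ x in (0:ℝ)..N, F x = N * (N ^ (-(α+γ)) * ∫ x in (0:ℝ)..1, g x) := by
          rw [e, ← mul_assoc, mul_inv_cancel₀ hN0.ne', one_mul]
      _ = (∫ x in (0:ℝ)..1, g x) * N ^ (1-γ-α) := by rw [← mul_assoc, hNpow]; ring
  -- conclusion
  have hLHS : ∑ k ∈ Finset.Ico 1 n, 1 / ((N - (k:ℝ)) ^ γ * (k:ℝ) ^ α) =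
      ∑ k ∈ Finset.Ico 1 n, F k := by
    apply Finset.sum_congr rfl
    intro k _
    simp only [hFdef]
    rw [mul_comm]
  rw [hLHS]
  calc ∑ k ∈ Finset.Ico 1 n, F k
      = (∑ k ∈ Finset.Ico 1 (m+1), F k) + ∑ k ∈ Finset.Ico (m+1) n, F k :=
        (Finset.sum_Ico_consecutive _ (by omega) hmn).symm
    _ ≤ (∫ x in (0:ℝ)..(m:ℝ), F x) + ∫ x in ((m:ℝ)+1)..N, F x := add_le_add hsum1 hsum2
    _ ≤ ∫ x in (0:ℝ)..N, F x := hjoin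
    _ = (∫ x in (0:ℝ)..1, g x) * N ^ (1-γ-α) := hfinal
end
end

section
/- Let Ω ⊂ ℝ³ be a bounded domain with sufficiently smooth boundary, let A = −Δ be the Dirichlet Laplacian on L²(Ω) (with dom(Δ) = H²(Ω) ∩ H₀¹(Ω)), and let B(t) be the multiplication operator by V(t,·), where V : [0,T] × Ω → ℝ is measurable, real and non-negative. If V ∈ L^∞([0,T], L^{2+ε}(Ω)) ∩ C^β([0,T], L^{1+ε}(Ω)) for some β ∈ (0,1) and ε > 0, then the assumptions (S1)–(S3) are satisfied with any α ∈ [3/4, 1): dom((−Δ)^α) ⊆ dom(B(t)) for a.e. t, the map t ↦ B(t)(−Δ)^{-α} is essentially operator-norm bounded, and the map t ↦ (−Δ)^{-α}B(t)(−Δ)^{-α} is Hölder continuous in operator norm with exponent β. -/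
open MeasureTheory Set ContinuousLinearMap

noncomputable section

set_option maxHeartbeats 2000000 in
/-- **Theorem 4.1** (example: diffusion equation with a time-dependent potential).
For the Dirichlet Laplacian `-Δ` on a bounded domain `Ω ⊂ ℝ³` (encoded through its bounded
fractional powers `Pm a = (-Δ)^{-a}` together with the Sobolev embedding
`dom((-Δ)^a) ⊆ L^q(Ω)` for `a ≥ 3/4`, `q ∈ [2,∞)`) and the multiplication operators
`B(t) = V(t,·)` with `V ≥ 0`, `V ∈ L^∞([0,T],L^{2+ε}) ∩ C^β([0,T],L^{1+ε})`, the
assumptions (S2) and (S3) hold for every `α ∈ [3/4,1)`: there is a bounded family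
`BAm t = B(t)(-Δ)^{-a}`, essentially operator-norm bounded, and
`t ↦ (-Δ)^{-a}B(t)(-Δ)^{-a}` is operator-norm Hölder continuous with exponent `β`. -/
theorem dirichlet_laplacian_time_dependent_potential_example
    (Ω : Set (EuclideanSpace ℝ (Fin 3))) (hΩ_open : IsOpen Ω)
    (hΩ_bdd : Bornology.IsBounded Ω)
    (T : ℝ) (hT : 0 < T)
    -- the Dirichlet Laplacian `-Δ`, a positive self-adjoint operator on `L²(Ω)` with
    -- `inf σ(-Δ) ≥ c > 0`, encoded through its bounded fractional powers `Pm a = (-Δ)^{-a}`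
    (Pm : ℝ → Lp ℂ 2 (volume.restrict Ω) →L[ℂ] Lp ℂ 2 (volume.restrict Ω))
    (hPm_zero : Pm 0 = 1)
    (hPm_add : ∀ ⦃a b : ℝ⦄, 0 ≤ a → 0 ≤ b → Pm (a + b) = Pm a ∘L Pm b)
    (hPm_pos : ∀ ⦃a : ℝ⦄, 0 ≤ a → (Pm a).IsPositive)
    (hPm_inj : ∀ ⦃a : ℝ⦄, 0 ≤ a → Function.Injective (Pm a))
    (c : ℝ) (hc : 0 < c) (hPm_norm : ∀ ⦃a : ℝ⦄, 0 ≤ a → ‖Pm a‖ ≤ c ^ (-a))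
    -- Sobolev embedding: `dom((-Δ)^a) = H₀^{2a}(Ω) ⊆ L^q(Ω)` for `a ≥ 3/4` and `q ∈ [2,∞)`
    (hSobolev : ∀ a : ℝ, 3 / 4 ≤ a → ∀ q : ℝ, 2 ≤ q → ∃ Cq : ℝ, 0 < Cq ∧
      ∀ u : Lp ℂ 2 (volume.restrict Ω),
        eLpNorm (Pm a u) (ENNReal.ofReal q) (volume.restrict Ω) ≤
          ENNReal.ofReal (Cq * ‖u‖))
    -- the potential: measurable, real, non-negative, with
    -- `V ∈ L^∞([0,T],L^{2+ε}(Ω)) ∩ C^β([0,T],L^{1+ε}(Ω))`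
    (V : ℝ → EuclideanSpace ℝ (Fin 3) → ℝ)
    (hV_meas : Measurable (Function.uncurry V))
    (hV_nonneg : ∀ t x, 0 ≤ V t x)
    (β ε : ℝ) (hβ : β ∈ Ioo (0:ℝ) 1) (hε : 0 < ε)
    (CV : ℝ) (hV_bdd : ∀ t ∈ Icc (0:ℝ) T,
      eLpNorm (fun x => V t x) (ENNReal.ofReal (2 + ε)) (volume.restrict Ω) ≤
        ENNReal.ofReal CV)
    (LV : ℝ) (hV_holder : ∀ t ∈ Icc (0:ℝ) T, ∀ s ∈ Icc (0:ℝ) T,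
      eLpNorm (fun x => V t x - V s x) (ENNReal.ofReal (1 + ε)) (volume.restrict Ω) ≤
        ENNReal.ofReal (LV * |t - s| ^ β)) :
    ∀ a : ℝ, 3 / 4 ≤ a → a < 1 →
      ∃ BAm : ℝ → Lp ℂ 2 (volume.restrict Ω) →L[ℂ] Lp ℂ 2 (volume.restrict Ω),
        -- `BAm t = B(t)(-Δ)^{-a}`, i.e. `dom((-Δ)^a) ⊆ dom(B(t))` and
        -- `(B(t)(-Δ)^{-a}u)(x) = V(t,x) ((-Δ)^{-a}u)(x)`
        (∀ t ∈ Icc (0:ℝ) T, ∀ u : Lp ℂ 2 (volume.restrict Ω),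
          (BAm t u : _ → ℂ) =ᵐ[volume.restrict Ω] fun x => (V t x : ℂ) * (Pm a u) x) ∧
        -- (S2): essential operator-norm boundedness of `t ↦ B(t)(-Δ)^{-a}`
        (∃ C : ℝ, ∀ t ∈ Icc (0:ℝ) T, ‖BAm t‖ ≤ C) ∧
        -- (S3): operator-norm Hölder continuity of `t ↦ (-Δ)^{-a}B(t)(-Δ)^{-a}`
        (∃ Lh : ℝ, 0 < Lh ∧ ∀ t ∈ Icc (0:ℝ) T, ∀ s ∈ Icc (0:ℝ) T,
          ‖Pm a ∘L (BAm t - BAm s)‖ ≤ Lh * |t - s| ^ β) := by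
  
  intro a ha3 ha1
  have ha0 : (0:ℝ) ≤ a := le_trans (by norm_num) ha3
  set q : ℝ := 2 * (2 + ε) / ε with hq_def
  set r : ℝ := 2 * (1 + ε) / ε with hr_def
  set p₂ : ℝ := 2 * (1 + ε) / (2 + ε) with hp2_def
  have h2ε : (0:ℝ) < 2 + ε := by linarith
  have h1ε : (0:ℝ) < 1 + ε := by linarith
  have hq2 : (2:ℝ) ≤ q := by rw [hq_def, le_div_iff₀ hε]; nlinarith
  have hr2 : (2:ℝ) ≤ r := by rw [hr_def, le_div_iff₀ hε]; nlinarith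
  have hqpos : (0:ℝ) < q := lt_of_lt_of_le two_pos hq2
  have hrpos : (0:ℝ) < r := lt_of_lt_of_le two_pos hr2
  have hp2pos : (0:ℝ) < p₂ := by rw [hp2_def]; positivity
  obtain ⟨Cq, hCq_pos, hCq⟩ := hSobolev a ha3 q hq2
  obtain ⟨Cr, hCr_pos, hCr⟩ := hSobolev a ha3 r hr2
  set CV' : ℝ := max CV 0 with hCV'_def
  set LV' : ℝ := max LV 0 with hLV'_def
  have hCV'0 : 0 ≤ CV' := le_max_right _ _
  have hLV'0 : 0 ≤ LV' := le_max_right _ _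
  -- measurability facts
  have hVm : ∀ t, Measurable fun x => V t x := fun t =>
    hV_meas.comp measurable_prodMk_left
  have hVc : ∀ t, AEStronglyMeasurable (fun x => (V t x : ℂ)) (volume.restrict Ω) := fun t =>
    (Complex.measurable_ofReal.comp (hVm t)).aestronglyMeasurable
  have hVsc : ∀ t s, AEStronglyMeasurable (fun x => ((V t x - V s x : ℝ) : ℂ)) (volume.restrict Ω) := fun t s =>
    (Complex.measurable_ofReal.comp ((hVm t).sub (hVm s))).aestronglyMeasurable
  have hcoe : ∀ (f : EuclideanSpace ℝ (Fin 3) → ℝ) (p : ENNReal),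
      eLpNorm (fun x => (f x : ℂ)) p (volume.restrict Ω) = eLpNorm f p (volume.restrict Ω) := fun f p =>
    eLpNorm_congr_norm_ae (Filter.Eventually.of_forall fun x => by simp)
  -- exponent arithmetic in ENNReal
  have hofdiv : ∀ x : ℝ, 0 < x → 1 / ENNReal.ofReal x = ENNReal.ofReal (1/x) := fun x hx => by
    rw [one_div, one_div, ← ENNReal.ofReal_inv_of_pos hx]
  have h2q : 1 / (2:ENNReal) = 1 / ENNReal.ofReal (2+ε) + 1 / ENNReal.ofReal q := by
    have h2 : (2:ENNReal) = ENNReal.ofReal 2 := by simp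
    rw [h2, hofdiv _ two_pos, hofdiv _ h2ε, hofdiv _ hqpos,
      ← ENNReal.ofReal_add (by positivity) (by positivity)]
    congr 1
    rw [hq_def]
    field_simp
    try ring
  have h1r : 1 / (1:ENNReal) = 1 / ENNReal.ofReal r + 1 / ENNReal.ofReal p₂ := by
    rw [hofdiv _ hrpos, hofdiv _ hp2pos,
      ← ENNReal.ofReal_add (by positivity) (by positivity)]
    rw [show (1:ENNReal)/1 = ENNReal.ofReal 1 by simp]
    congr 1
    rw [hr_def, hp2_def]
    field_simp
    try ring
  have hp2r : 1 / ENNReal.ofReal p₂ = 1 / ENNReal.ofReal (1+ε) + 1 / ENNReal.ofReal r := by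
    rw [hofdiv _ hp2pos, hofdiv _ h1ε, hofdiv _ hrpos,
      ← ENNReal.ofReal_add (by positivity) (by positivity)]
    congr 1
    rw [hr_def, hp2_def]
    field_simp
    try ring
  -- the key S2 estimate
  have key2 : ∀ t ∈ Icc (0:ℝ) T, ∀ u : Lp ℂ 2 (volume.restrict Ω),
      eLpNorm (fun x => (V t x : ℂ) * (Pm a u) x) 2 (volume.restrict Ω) ≤ ENNReal.ofReal (CV' * (Cq * ‖u‖)) := by
    intro t ht u
    have step : eLpNorm (fun x => (V t x : ℂ) * (Pm a u) x) 2 (volume.restrict Ω) ≤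
        eLpNorm (fun x => (V t x : ℂ)) (ENNReal.ofReal (2+ε)) (volume.restrict Ω) *
        eLpNorm (fun x => (Pm a u) x) (ENNReal.ofReal q) (volume.restrict Ω) :=
      by
        haveI : ENNReal.HolderTriple (ENNReal.ofReal (2+ε)) (ENNReal.ofReal q) 2 :=
          ⟨by simpa only [one_div] using h2q.symm⟩
        have h := eLpNorm_le_eLpNorm_mul_eLpNorm_of_nnnorm (p := ENNReal.ofReal (2+ε))
          (q := ENNReal.ofReal q) (r := 2) (hVc t) (Lp.aestronglyMeasurable (Pm a u))
          (fun c d => c * d) 1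
          (Filter.Eventually.of_forall fun x => by rw [one_mul]; exact (nnnorm_mul _ _).le)
        rwa [ENNReal.coe_one, one_mul] at h
    refine step.trans ?_
    rw [ENNReal.ofReal_mul hCV'0]
    have hb : eLpNorm (fun x => (V t x : ℂ)) (ENNReal.ofReal (2+ε)) (volume.restrict Ω) ≤ ENNReal.ofReal CV' := by
      rw [hcoe]
      exact (hV_bdd t ht).trans (ENNReal.ofReal_le_ofReal (le_max_left _ _))
    exact mul_le_mul' hb (hCq u)
  have hmem : ∀ t ∈ Icc (0:ℝ) T, ∀ u : Lp ℂ 2 (volume.restrict Ω),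
      MemLp (fun x => (V t x : ℂ) * (Pm a u) x) 2 (volume.restrict Ω) := fun t ht u =>
    ⟨(hVc t).mul (Lp.aestronglyMeasurable _), (key2 t ht u).trans_lt ENNReal.ofReal_lt_top⟩
  -- construct the operators
  have hop : ∀ t, t ∈ Icc (0:ℝ) T → ∃ Bt : Lp ℂ 2 (volume.restrict Ω) →L[ℂ] Lp ℂ 2 (volume.restrict Ω),
      (∀ u : Lp ℂ 2 (volume.restrict Ω), (Bt u : _ → ℂ) =ᵐ[(volume.restrict Ω)] fun x => (V t x : ℂ) * (Pm a u) x) ∧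
      ‖Bt‖ ≤ CV' * Cq := by
    intro t ht
    let L : Lp ℂ 2 (volume.restrict Ω) →ₗ[ℂ] Lp ℂ 2 (volume.restrict Ω) :=
      { toFun := fun u => (hmem t ht u).toLp _
        map_add' := by
          intro u v
          rw [← MemLp.toLp_add]
          refine (MemLp.toLp_eq_toLp_iff _ _).2 ?_
          have h1 : ((Pm a (u + v) : Lp ℂ 2 (volume.restrict Ω)) : _ → ℂ) =ᵐ[(volume.restrict Ω)]
              (fun x => (Pm a u) x) + fun x => (Pm a v) x := by
            rw [map_add]; exact Lp.coeFn_add _ _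
          filter_upwards [h1] with x hx
          simp only [Pi.add_apply] at hx ⊢
          rw [hx]; ring
        map_smul' := by
          intro c u
          simp only [RingHom.id_apply]
          rw [← MemLp.toLp_const_smul]
          refine (MemLp.toLp_eq_toLp_iff _ _).2 ?_
          have h1 : ((Pm a (c • u) : Lp ℂ 2 (volume.restrict Ω)) : _ → ℂ) =ᵐ[(volume.restrict Ω)] c • fun x => (Pm a u) x := by
            rw [_root_.map_smul]; exact Lp.coeFn_smul _ _
          filter_upwards [h1] with x hx
          simp only [Pi.smul_apply, smul_eq_mul] at hx ⊢
          rw [hx]; ring }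
    have hb : ∀ u : Lp ℂ 2 (volume.restrict Ω), ‖L u‖ ≤ (CV' * Cq) * ‖u‖ := by
      intro u
      have hLu : L u = (hmem t ht u).toLp _ := rfl
      rw [hLu, Lp.norm_toLp]
      refine ENNReal.toReal_le_of_le_ofReal
        (mul_nonneg (mul_nonneg hCV'0 hCq_pos.le) (norm_nonneg u)) ?_
      rw [mul_assoc]
      exact key2 t ht u
    exact ⟨L.mkContinuous (CV' * Cq) hb, fun u => MemLp.coeFn_toLp (hmem t ht u),
      LinearMap.mkContinuous_norm_le _ (mul_nonneg hCV'0 hCq_pos.le) _⟩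
  classical
  refine ⟨fun t => if ht : t ∈ Icc (0:ℝ) T then (hop t ht).choose else 0, ?_, ?_, ?_⟩
  · intro t ht u
    simp only [dif_pos ht]
    exact (hop t ht).choose_spec.1 u
  · exact ⟨CV' * Cq, fun t ht => by
      simp only [dif_pos ht]; exact (hop t ht).choose_spec.2⟩
  · -- (S3)
    have hA : (0:ℝ) ≤ Cr * Cr * LV' := mul_nonneg (mul_nonneg hCr_pos.le hCr_pos.le) hLV'0
    refine ⟨Cr * Cr * LV' + 1, by linarith, ?_⟩
    intro t ht s hs
    have hX0 : (0:ℝ) ≤ |t - s| ^ β := Real.rpow_nonneg (abs_nonneg _) _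
    refine ContinuousLinearMap.opNorm_le_bound _ (mul_nonneg (by linarith) hX0) ?_
    intro u
    simp only [ContinuousLinearMap.comp_apply, ContinuousLinearMap.sub_apply,
      dif_pos ht, dif_pos hs]
    have hsa_inner : ∀ x y : Lp ℂ 2 (volume.restrict Ω),
        (inner ℂ (Pm a x) y : ℂ) = inner ℂ x (Pm a y) := fun x y => by
      rw [← ContinuousLinearMap.adjoint_inner_left, ((hPm_pos ha0).isSelfAdjoint).adjoint_eq]
    set w : Lp ℂ 2 (volume.restrict Ω) := (hop t ht).choose u - (hop s hs).choose u with hw_def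
    set v : Lp ℂ 2 (volume.restrict Ω) := Pm a w with hv_def
    have hw : (w : _ → ℂ) =ᵐ[(volume.restrict Ω)] fun x => ((V t x - V s x : ℝ) : ℂ) * (Pm a u) x := by
      filter_upwards [Lp.coeFn_sub ((hop t ht).choose u) ((hop s hs).choose u),
        (hop t ht).choose_spec.1 u, (hop s hs).choose_spec.1 u] with x h1 h2 h3
      rw [h1, Pi.sub_apply, h2, h3]
      push_cast
      ring
    have hVd : eLpNorm (fun x => ((V t x - V s x : ℝ) : ℂ)) (ENNReal.ofReal (1+ε)) (volume.restrict Ω) ≤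
        ENNReal.ofReal (LV' * |t - s| ^ β) := by
      rw [hcoe]
      refine (hV_holder t ht s hs).trans (ENNReal.ofReal_le_ofReal ?_)
      exact mul_le_mul_of_nonneg_right (le_max_left _ _) hX0
    have e1 : ‖v‖ ^ 2 = RCLike.re (inner ℂ (Pm a v) w : ℂ) := by
      rw [hsa_inner, ← hv_def, inner_self_eq_norm_sq]
    have e3 : ‖(inner ℂ (Pm a v) w : ℂ)‖ ≤
        (eLpNorm (fun x => (inner ℂ ((Pm a v) x) (w x) : ℂ)) 1 (volume.restrict Ω)).toReal := by
      rw [MeasureTheory.L2.inner_def, eLpNorm_one_eq_lintegral_enorm]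
      have hni := norm_integral_le_lintegral_norm (μ := volume.restrict Ω)
        (fun x => (inner ℂ ((Pm a v) x) (w x) : ℂ))
      simp_rw [ofReal_norm] at hni
      exact hni
    have e4 : eLpNorm (fun x => (inner ℂ ((Pm a v) x) (w x) : ℂ)) 1 (volume.restrict Ω) ≤
        eLpNorm (fun x => (Pm a v) x) (ENNReal.ofReal r) (volume.restrict Ω) *
        eLpNorm (fun x => w x) (ENNReal.ofReal p₂) (volume.restrict Ω) :=
      by
        haveI : ENNReal.HolderTriple (ENNReal.ofReal r) (ENNReal.ofReal p₂) 1 :=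
          ⟨by simpa only [one_div] using h1r.symm⟩
        have h := eLpNorm_le_eLpNorm_mul_eLpNorm_of_nnnorm (p := ENNReal.ofReal r)
          (q := ENNReal.ofReal p₂) (r := 1) (Lp.aestronglyMeasurable (Pm a v))
          (Lp.aestronglyMeasurable w) (fun c d => (inner ℂ c d : ℂ)) 1
          (Filter.Eventually.of_forall fun x => by
            rw [one_mul]; exact nnnorm_inner_le_nnnorm (𝕜 := ℂ) _ _)
        rwa [ENNReal.coe_one, one_mul] at h
    have e5 : eLpNorm (fun x => w x) (ENNReal.ofReal p₂) (volume.restrict Ω) ≤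
        ENNReal.ofReal (LV' * |t - s| ^ β) * ENNReal.ofReal (Cr * ‖u‖) := by
      rw [eLpNorm_congr_ae hw]
      haveI : ENNReal.HolderTriple (ENNReal.ofReal (1+ε)) (ENNReal.ofReal r) (ENNReal.ofReal p₂) :=
        ⟨by simpa only [one_div] using hp2r.symm⟩
      have h := eLpNorm_le_eLpNorm_mul_eLpNorm_of_nnnorm (p := ENNReal.ofReal (1+ε))
        (q := ENNReal.ofReal r) (r := ENNReal.ofReal p₂) (hVsc t s)
        (Lp.aestronglyMeasurable (Pm a u)) (fun c d => c * d) 1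
        (Filter.Eventually.of_forall fun x => by rw [one_mul]; exact (nnnorm_mul _ _).le)
      rw [ENNReal.coe_one, one_mul] at h
      refine h.trans ?_
      exact mul_le_mul' hVd (hCr u)
    have e6 : eLpNorm (fun x => (inner ℂ ((Pm a v) x) (w x) : ℂ)) 1 (volume.restrict Ω) ≤
        ENNReal.ofReal ((Cr * ‖v‖) * ((LV' * |t - s| ^ β) * (Cr * ‖u‖))) := by
      refine e4.trans ?_
      rw [ENNReal.ofReal_mul (mul_nonneg hCr_pos.le (norm_nonneg v)),
        ENNReal.ofReal_mul (mul_nonneg hLV'0 hX0)]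
      exact mul_le_mul' (hCr v) e5
    have hkey : ‖v‖ ^ 2 ≤ (Cr * ‖v‖) * ((LV' * |t - s| ^ β) * (Cr * ‖u‖)) := by
      rw [e1]
      refine le_trans (RCLike.re_le_norm _) (le_trans e3 ?_)
      exact ENNReal.toReal_le_of_le_ofReal
        (mul_nonneg (mul_nonneg hCr_pos.le (norm_nonneg v))
          (mul_nonneg (mul_nonneg hLV'0 hX0) (mul_nonneg hCr_pos.le (norm_nonneg u)))) e6
    by_cases hv0 : ‖v‖ = 0
    · rw [hv0]
      exact mul_nonneg (mul_nonneg (by linarith) hX0) (norm_nonneg u)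
    · have hvpos : 0 < ‖v‖ := (norm_nonneg v).lt_of_ne (Ne.symm hv0)
      have h9 : ‖v‖ * ‖v‖ ≤ ‖v‖ * (Cr * Cr * LV' * (|t - s| ^ β * ‖u‖)) := by
        calc ‖v‖ * ‖v‖ = ‖v‖ ^ 2 := (pow_two _).symm
        _ ≤ (Cr * ‖v‖) * ((LV' * |t - s| ^ β) * (Cr * ‖u‖)) := hkey
        _ = ‖v‖ * (Cr * Cr * LV' * (|t - s| ^ β * ‖u‖)) := by ring
      have h10 := le_of_mul_le_mul_left h9 hvpos
      have hXu : (0:ℝ) ≤ |t - s| ^ β * ‖u‖ := mul_nonneg hX0 (norm_nonneg u)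
      calc ‖v‖ ≤ Cr * Cr * LV' * (|t - s| ^ β * ‖u‖) := h10
      _ ≤ (Cr * Cr * LV' + 1) * |t - s| ^ β * ‖u‖ := by nlinarith
end
end
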